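/- Let G be a finite graph on k vertices, i a vertex with n_i neighbors, and let a uniformly random permutation π of the k vertices be given. Let n_π(i) be the number of neighbors of i preceding i in π. Then for each r ∈ {0, 1, …, n_i}, the probability that n_π(i) = r equals 1/(n_i + 1); equivalently, the number of permutations π with n_π(i) = r is k!/(n_i + 1). -/

import Mathlib

open Finset
open scoped Classical

namespace DagarAux

open Equiv

variable {k : ℕ} (G : SimpleGraph (Fin k)) [DecidableRel G.Adj] (i : Fin k)

/-- Positions occupied by neighbours of `i` under `π`. -/
def Npos (π : Equiv.Perm (Fin k)) : Finset (Fin k) := (G.neighborFinset i).image π.symm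

lemma mem_Npos {π : Equiv.Perm (Fin k)} {x : Fin k} :
    x ∈ Npos G i π ↔ π x ∈ G.neighborFinset i := by
  constructor
  · rintro hx
    rcases Finset.mem_image.1 hx with ⟨j, hj, rfl⟩
    simpa using hj
  · intro hx
    exact Finset.mem_image.2 ⟨π x, hx, by simp⟩

lemma pos_not_mem (π : Equiv.Perm (Fin k)) : π.symm i ∉ Npos G i π := by
  simp [mem_Npos]

lemma card_Npos (π : Equiv.Perm (Fin k)) : (Npos G i π).card = G.degree i := by
  rw [Npos, Finset.card_image_of_injective _ π.symm.injective]
  rfl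

/-- Positions of neighbours of `i` preceding `i`. -/
def bef (π : Equiv.Perm (Fin k)) : Finset (Fin k) :=
  (Npos G i π).filter (fun x => x < π.symm i)

/-- Positions of neighbours of `i` following `i`. -/
def aft (π : Equiv.Perm (Fin k)) : Finset (Fin k) :=
  (Npos G i π).filter (fun x => π.symm i < x)

lemma count_eq (π : Equiv.Perm (Fin k)) :
    ((G.neighborFinset i).filter (fun j => π.symm j < π.symm i)).card = (bef G i π).card := by
  have h : bef G i π
      = ((G.neighborFinset i).filter (fun j => π.symm j < π.symm i)).image π.symm := by
    ext x
    simp only [bef, Npos, mem_filter, mem_image]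
    constructor
    · rintro ⟨⟨j, hj, rfl⟩, hlt⟩; exact ⟨j, ⟨hj, hlt⟩, rfl⟩
    · rintro ⟨j, ⟨hj, hlt⟩, rfl⟩; exact ⟨⟨j, hj, rfl⟩, hlt⟩
  rw [h, Finset.card_image_of_injective _ π.symm.injective]

lemma card_bef_add_card_aft (π : Equiv.Perm (Fin k)) :
    (bef G i π).card + (aft G i π).card = G.degree i := by
  have haft : aft G i π = (Npos G i π).filter (fun x => ¬ x < π.symm i) := by
    ext x
    simp only [aft, mem_filter, and_congr_right_iff]
    intro hx
    constructor
    · intro h; exact not_lt.2 h.le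
    · intro h
      rcases (not_lt.1 h).lt_or_eq with h' | h'
      · exact h'
      · exact absurd (h' ▸ hx) (pos_not_mem G i π)
  rw [bef, haft, Finset.card_filter_add_card_filter_not, card_Npos]

noncomputable def fstep (π : Equiv.Perm (Fin k)) : Equiv.Perm (Fin k) :=
  if h : (bef G i π).Nonempty then
    (Equiv.swap ((bef G i π).max' h) (π.symm i)).trans π else π

noncomputable def gstep (π : Equiv.Perm (Fin k)) : Equiv.Perm (Fin k) :=
  if h : (aft G i π).Nonempty then
    (Equiv.swap ((aft G i π).min' h) (π.symm i)).trans π else π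

section fstepLemmas

variable {π : Equiv.Perm (Fin k)} (h : (bef G i π).Nonempty)
include h

lemma fstep_eq : fstep G i π = (Equiv.swap ((bef G i π).max' h) (π.symm i)).trans π :=
  dif_pos h

lemma max'_lt : (bef G i π).max' h < π.symm i :=
  (Finset.mem_filter.1 ((bef G i π).max'_mem h)).2

lemma max'_mem_Npos : (bef G i π).max' h ∈ Npos G i π :=
  (Finset.mem_filter.1 ((bef G i π).max'_mem h)).1

lemma fstep_symm_i : (fstep G i π).symm i = (bef G i π).max' h := by
  rw [fstep_eq G i h]
  show Equiv.swap ((bef G i π).max' h) (π.symm i) (π.symm i) = _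
  rw [Equiv.swap_apply_right]

lemma mem_Npos_fstep {x : Fin k} :
    x ∈ Npos G i (fstep G i π) ↔
      Equiv.swap ((bef G i π).max' h) (π.symm i) x ∈ Npos G i π := by
  rw [mem_Npos, mem_Npos, fstep_eq G i h]; rfl

lemma bef_fstep : bef G i (fstep G i π) = (bef G i π).erase ((bef G i π).max' h) := by
  set p := (bef G i π).max' h with hp
  set q := π.symm i with hq
  have hpq : p < q := max'_lt G i h
  ext x
  rw [bef, mem_filter, mem_Npos_fstep G i h, fstep_symm_i G i h, mem_erase, ← hp, ← hq]
  rcases eq_or_ne x p with rfl | hxp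
  · rw [Equiv.swap_apply_left]
    constructor
    · rintro ⟨hmem, -⟩; exact absurd hmem (pos_not_mem G i π)
    · rintro ⟨hne, -⟩; exact absurd rfl hne
  rcases eq_or_ne x q with rfl | hxq
  · constructor
    · rintro ⟨-, hlt⟩; exact absurd hlt (not_lt.2 hpq.le)
    · rintro ⟨-, hlt⟩
      exact absurd (Finset.mem_filter.1 hlt).2 (lt_irrefl _)
  rw [Equiv.swap_apply_of_ne_of_ne hxp hxq]
  constructor
  · rintro ⟨hmem, hlt⟩
    exact ⟨hxp, Finset.mem_filter.2 ⟨hmem, hlt.trans hpq⟩⟩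
  · rintro ⟨hne, hmem'⟩
    obtain ⟨hmem, hlt⟩ := Finset.mem_filter.1 hmem'
    refine ⟨hmem, ?_⟩
    exact lt_of_le_of_ne ((bef G i π).le_max' x hmem') hne

lemma aft_fstep : aft G i (fstep G i π) = insert (π.symm i) (aft G i π) := by
  set p := (bef G i π).max' h with hp
  set q := π.symm i with hq
  have hpq : p < q := max'_lt G i h
  ext x
  rw [aft, mem_filter, mem_Npos_fstep G i h, fstep_symm_i G i h, mem_insert, aft, mem_filter,
    ← hp, ← hq]
  rcases eq_or_ne x q with rfl | hxq
  · rw [Equiv.swap_apply_right]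
    exact ⟨fun _ => Or.inl rfl, fun _ => ⟨max'_mem_Npos G i h, hpq⟩⟩
  rcases eq_or_ne x p with rfl | hxp
  · constructor
    · rintro ⟨-, hlt⟩; exact absurd hlt (lt_irrefl _)
    · rintro (hxq' | ⟨-, hlt⟩)
      · exact absurd hxq' (ne_of_lt hpq)
      · exact absurd (hpq.trans hlt) (lt_irrefl _)
  rw [Equiv.swap_apply_of_ne_of_ne hxp hxq]
  constructor
  · rintro ⟨hmem, hlt⟩
    right
    refine ⟨hmem, ?_⟩
    rcases lt_trichotomy x q with h' | h' | h'
    · exact absurd ((bef G i π).le_max' x (Finset.mem_filter.2 ⟨hmem, h'⟩)) (not_le.2 hlt)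
    · exact absurd h' hxq
    · exact h'
  · rintro (hxq' | ⟨hmem, hlt⟩)
    · exact absurd hxq' hxq
    · exact ⟨hmem, hpq.trans hlt⟩

lemma gstep_fstep : gstep G i (fstep G i π) = π := by
  have haft : aft G i (fstep G i π) = insert (π.symm i) (aft G i π) := aft_fstep G i h
  have hne : (aft G i (fstep G i π)).Nonempty := by
    rw [haft]; exact insert_nonempty _ _
  have hmin : (aft G i (fstep G i π)).min' hne = π.symm i := by
    apply le_antisymm
    · exact Finset.min'_le _ _ (by rw [haft]; exact mem_insert_self _ _)
    · apply Finset.le_min'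
      intro y hy
      rw [haft, mem_insert] at hy
      rcases hy with rfl | hy
      · exact le_rfl
      · exact (Finset.mem_filter.1 hy).2.le
  rw [gstep, dif_pos hne, hmin, fstep_symm_i G i h, fstep_eq G i h]
  ext x
  simp [Equiv.swap_comm]

end fstepLemmas

section gstepLemmas

variable {π : Equiv.Perm (Fin k)} (h : (aft G i π).Nonempty)
include h

lemma gstep_eq : gstep G i π = (Equiv.swap ((aft G i π).min' h) (π.symm i)).trans π :=
  dif_pos h

lemma lt_min' : π.symm i < (aft G i π).min' h :=
  (Finset.mem_filter.1 ((aft G i π).min'_mem h)).2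

lemma min'_mem_Npos : (aft G i π).min' h ∈ Npos G i π :=
  (Finset.mem_filter.1 ((aft G i π).min'_mem h)).1

lemma gstep_symm_i : (gstep G i π).symm i = (aft G i π).min' h := by
  rw [gstep_eq G i h]
  show Equiv.swap ((aft G i π).min' h) (π.symm i) (π.symm i) = _
  rw [Equiv.swap_apply_right]

lemma mem_Npos_gstep {x : Fin k} :
    x ∈ Npos G i (gstep G i π) ↔
      Equiv.swap ((aft G i π).min' h) (π.symm i) x ∈ Npos G i π := by
  rw [mem_Npos, mem_Npos, gstep_eq G i h]; rfl

lemma bef_gstep : bef G i (gstep G i π) = insert (π.symm i) (bef G i π) := by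
  set p := (aft G i π).min' h with hp
  set q := π.symm i with hq
  have hpq : q < p := lt_min' G i h
  ext x
  rw [bef, mem_filter, mem_Npos_gstep G i h, gstep_symm_i G i h, mem_insert, bef, mem_filter,
    ← hp, ← hq]
  rcases eq_or_ne x q with rfl | hxq
  · rw [Equiv.swap_apply_right]
    exact ⟨fun _ => Or.inl rfl, fun _ => ⟨min'_mem_Npos G i h, hpq⟩⟩
  rcases eq_or_ne x p with rfl | hxp
  · constructor
    · rintro ⟨-, hlt⟩; exact absurd hlt (lt_irrefl _)
    · rintro (hxq' | ⟨-, hlt⟩)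
      · exact absurd hxq' (ne_of_gt hpq)
      · exact absurd (hlt.trans hpq) (lt_irrefl _)
  rw [Equiv.swap_apply_of_ne_of_ne hxp hxq]
  constructor
  · rintro ⟨hmem, hlt⟩
    right
    refine ⟨hmem, ?_⟩
    rcases lt_trichotomy x q with h' | h' | h'
    · exact h'
    · exact absurd h' hxq
    · exact absurd hlt (not_lt.2 ((aft G i π).min'_le x (Finset.mem_filter.2 ⟨hmem, h'⟩)))
  · rintro (hxq' | ⟨hmem, hlt⟩)
    · exact absurd hxq' hxq
    · exact ⟨hmem, hlt.trans hpq⟩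

lemma fstep_gstep : fstep G i (gstep G i π) = π := by
  have hbef : bef G i (gstep G i π) = insert (π.symm i) (bef G i π) := bef_gstep G i h
  have hne : (bef G i (gstep G i π)).Nonempty := by
    rw [hbef]; exact insert_nonempty _ _
  have hmax : (bef G i (gstep G i π)).max' hne = π.symm i := by
    apply le_antisymm
    · apply Finset.max'_le
      intro y hy
      rw [hbef, mem_insert] at hy
      rcases hy with rfl | hy
      · exact le_rfl
      · exact (Finset.mem_filter.1 hy).2.le
    · exact Finset.le_max' _ _ (by rw [hbef]; exact mem_insert_self _ _)
  rw [fstep, dif_pos hne, hmax, gstep_symm_i G i h, gstep_eq G i h]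
  ext x
  simp [Equiv.swap_comm]

end gstepLemmas

lemma card_step (m : ℕ) (hm : m + 1 ≤ G.degree i) :
    (univ.filter fun π : Equiv.Perm (Fin k) => (bef G i π).card = m + 1).card
      = (univ.filter fun π : Equiv.Perm (Fin k) => (bef G i π).card = m).card := by
  apply Finset.card_nbij' (fstep G i) (gstep G i)
  · intro π hπ
    rw [Finset.mem_coe, mem_filter] at hπ ⊢
    have h : (bef G i π).Nonempty := Finset.card_pos.1 (by omega)
    refine ⟨mem_univ _, ?_⟩
    rw [bef_fstep G i h, Finset.card_erase_of_mem ((bef G i π).max'_mem h), hπ.2]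
    omega
  · intro π hπ
    rw [Finset.mem_coe, mem_filter] at hπ ⊢
    have hsum := card_bef_add_card_aft G i π
    have h : (aft G i π).Nonempty := Finset.card_pos.1 (by omega)
    refine ⟨mem_univ _, ?_⟩
    rw [bef_gstep G i h, Finset.card_insert_of_notMem, hπ.2]
    intro hmem
    exact pos_not_mem G i π (Finset.mem_filter.1 hmem).1
  · intro π hπ
    rw [Finset.mem_coe, mem_filter] at hπ
    have h : (bef G i π).Nonempty := Finset.card_pos.1 (by omega)
    exact gstep_fstep G i h
  · intro π hπ
    rw [Finset.mem_coe, mem_filter] at hπ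
    have hsum := card_bef_add_card_aft G i π
    have h : (aft G i π).Nonempty := Finset.card_pos.1 (by omega)
    exact fstep_gstep G i h

lemma card_const (r : ℕ) (hr : r ≤ G.degree i) :
    (univ.filter fun π : Equiv.Perm (Fin k) => (bef G i π).card = r).card
      = (univ.filter fun π : Equiv.Perm (Fin k) => (bef G i π).card = 0).card := by
  induction r with
  | zero => rfl
  | succ m ih => rw [card_step G i m hr]; exact ih (by omega)

end DagarAux

open DagarAux in
/-- For a fixed vertex `i` of degree `nᵢ` in a graph on `k` vertices, and each
`r ∈ {0,…,nᵢ}`, the number of permutations `π` of the vertices under which exactly `r`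
neighbours of `i` precede `i` equals `k!/(nᵢ+1)`. -/
theorem dagar_perm_count {k : ℕ} (G : SimpleGraph (Fin k)) [DecidableRel G.Adj]
    (i : Fin k) (r : ℕ) (hr : r ≤ G.degree i) :
    (Finset.univ.filter (fun π : Equiv.Perm (Fin k) =>
        ((G.neighborFinset i).filter (fun j => π.symm j < π.symm i)).card = r)).card
      = (Nat.factorial k) / (G.degree i + 1) := by
  classical
  have hA : (Finset.univ.filter (fun π : Equiv.Perm (Fin k) =>
      ((G.neighborFinset i).filter (fun j => π.symm j < π.symm i)).card = r))
      = (univ.filter fun π : Equiv.Perm (Fin k) => (bef G i π).card = r) := by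
    apply Finset.filter_congr
    intro π _
    rw [count_eq]
  have hsum : ∑ s ∈ Finset.range (G.degree i + 1),
      (univ.filter fun π : Equiv.Perm (Fin k) => (bef G i π).card = s).card
      = Nat.factorial k := by
    rw [← Finset.card_eq_sum_card_fiberwise
      (f := fun π : Equiv.Perm (Fin k) => (bef G i π).card) (fun π _ => ?_)]
    · simp [Fintype.card_perm]
    · rw [Finset.mem_coe, Finset.mem_range, Nat.lt_succ_iff]
      calc (bef G i π).card ≤ (Npos G i π).card := Finset.card_filter_le _ _
        _ = G.degree i := card_Npos G i π
  have hconst : ∑ s ∈ Finset.range (G.degree i + 1),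
      (univ.filter fun π : Equiv.Perm (Fin k) => (bef G i π).card = s).card
      = (G.degree i + 1)
        * (univ.filter fun π : Equiv.Perm (Fin k) => (bef G i π).card = 0).card := by
    rw [Finset.sum_congr rfl (fun s hs => card_const G i s
      (by rw [Finset.mem_range, Nat.lt_succ_iff] at hs; exact hs))]
    rw [Finset.sum_const, Finset.card_range, smul_eq_mul]
  rw [hA, card_const G i r hr]
  rw [hconst] at hsum
  rw [← hsum, Nat.mul_div_cancel_left _ (Nat.succ_pos _)]
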